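/- Let $\Sigma$ be a finite alphabet and $\mathcal{M} \subset \mathcal{M}(\Sigma)$ a transition complete set of probability measures on $\Sigma^{\mathbb{N}}$ satisfying $\mathcal{M} = \overline{\bigcup_{\alpha\in\Sigma}\tau(\alpha)\mathcal{M}}$. Then for every $I \in \mathbb{N}$, $\mathcal{M} = \overline{\bigcup_{a} \tau(a)\mathcal{M}}$, where the union runs over all admissible words $a$ of length $I$ of the presented subshift $X^{(\mathcal{M})}$. -/

import Mathlib

open MeasureTheory ProbabilityTheory Set

variable {A : Type*} [Fintype A] [TopologicalSpace A] [DiscreteTopology A]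
  [MeasurableSpace A] [BorelSpace A]

/-- The cylinder set of sequences beginning with the word `a`. -/
def cyl {A : Type*} (a : List A) : Set (ℕ → A) := {v | ∀ j : Fin a.length, v j = a.get j}

/-- The transition `τ(a)` on measures: condition on the cylinder `C(a)` and shift by
`|a|`, so that `τ(a)μ(C(b)) = μ(C(ab))/μ(C(a))`. -/
noncomputable def tauWord {A : Type*} [MeasurableSpace A] (a : List A)
    (μ : Measure (ℕ → A)) : Measure (ℕ → A) :=
  Measure.map (fun v n => v (n + a.length)) (μ[|cyl a])

/-- Transition completeness of a set of probability measures on `Σ^ℕ`. -/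
def TransComplete (M : Set (ProbabilityMeasure (ℕ → A))) : Prop :=
  ∀ μ ∈ M, ∀ σ : A, ∀ ν : ProbabilityMeasure (ℕ → A),
    (ν : Measure (ℕ → A)) = tauWord [σ] (μ : Measure (ℕ → A)) → ν ∈ M

/-- Condition (I): `M = closure (⋃_α τ(α) M)`. -/
def CondI (M : Set (ProbabilityMeasure (ℕ → A))) : Prop :=
  M = closure (⋃ σ : A, {ν : ProbabilityMeasure (ℕ → A) |
    ∃ μ ∈ M, (ν : Measure (ℕ → A)) = tauWord [σ] (μ : Measure (ℕ → A))})

/-- The language presented by `M`: words `a` with `μ(C(a)) > 0` for some `μ ∈ M`. -/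
def Lang (M : Set (ProbabilityMeasure (ℕ → A))) : Set (List A) :=
  {a | ∃ μ ∈ M, (μ : Measure (ℕ → A)) (cyl a) ≠ 0}

/-! ### Auxiliary lemmas -/

section Aux

open Filter Topology BoundedContinuousFunction

set_option linter.unusedSectionVars false

lemma isClopen_cyl (a : List A) : IsClopen (cyl a) := by
  have : cyl a = ⋂ j : Fin a.length, (fun v : ℕ → A => v j) ⁻¹' {a.get j} := by
    ext v; simp [cyl]
  rw [this]
  exact isClopen_iInter_of_finite fun j =>
    (isClopen_discrete {a.get j}).preimage (continuous_apply _)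

lemma measurableSet_cyl (a : List A) : MeasurableSet (cyl a) :=
  (isClopen_cyl a).isClosed.measurableSet

lemma measurable_shift (k : ℕ) : Measurable (fun v : ℕ → A => fun n => v (n + k)) :=
  measurable_pi_lambda _ fun n => measurable_pi_apply (n + k)

lemma cyl_nil : cyl ([] : List A) = Set.univ := by
  ext v; simp [cyl]

lemma cyl_cons (σ : A) (b : List A) :
    cyl (σ :: b) = cyl [σ] ∩ (fun v : ℕ → A => fun n => v (n + 1)) ⁻¹' cyl b := by
  ext v
  constructor
  · intro h
    refine ⟨fun j => ?_, fun j => ?_⟩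
    · have h0 := h ⟨0, by simp⟩
      simpa using h0
    · have hj := h ⟨(j : ℕ) + 1, by simpa using Nat.succ_lt_succ j.isLt⟩
      simpa using hj
  · rintro ⟨h1, h2⟩ j
    rcases j with ⟨jv, hjv⟩
    cases jv with
    | zero => simpa using h1 ⟨0, by simp⟩
    | succ k =>
      have hk := h2 ⟨k, by simpa using Nat.lt_of_succ_lt_succ hjv⟩
      simpa using hk

lemma tauWord_nil (μ : Measure (ℕ → A)) [IsProbabilityMeasure μ] : tauWord [] μ = μ := by
  rw [tauWord, cyl_nil, cond_univ]
  have h : (fun (v : ℕ → A) (n : ℕ) => v (n + ([] : List A).length)) = id := rfl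
  rw [h, Measure.map_id]

lemma cond_map {X Y : Type*} [MeasurableSpace X] [MeasurableSpace Y] (μ : Measure X)
    {f : X → Y} (hf : Measurable f) {s : Set Y} (hs : MeasurableSet s) :
    (Measure.map f μ)[|s] = Measure.map f (μ[|f ⁻¹' s]) := by
  rw [ProbabilityTheory.cond, ProbabilityTheory.cond, Measure.restrict_map hf hs,
    Measure.map_smul, Measure.map_apply hf hs]

lemma tauWord_cons (σ : A) (b : List A) (μ : Measure (ℕ → A)) [IsFiniteMeasure μ] :
    tauWord (σ :: b) μ = tauWord b (tauWord [σ] μ) := by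
  show _ = Measure.map (fun v n => v (n + b.length))
      ((Measure.map (fun v n => v (n + 1)) (μ[|cyl [σ]]))[|cyl b])
  rw [cond_map _ (measurable_shift 1) (measurableSet_cyl b),
    cond_cond_eq_cond_inter (measurableSet_cyl [σ])
      ((measurable_shift 1) (measurableSet_cyl b)) μ,
    Measure.map_map (measurable_shift b.length) (measurable_shift 1), ← cyl_cons]
  rfl

lemma tauWord_eq_zero (a : List A) {μ : Measure (ℕ → A)} (h : μ (cyl a) = 0) :
    tauWord a μ = 0 := by
  rw [tauWord, cond_eq_zero_of_meas_eq_zero h, Measure.map_zero]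

lemma tauWord_zero (a : List A) : tauWord a (0 : Measure (ℕ → A)) = 0 :=
  tauWord_eq_zero a rfl

lemma isProbabilityMeasure_tauWord (a : List A) {μ : Measure (ℕ → A)} [IsFiniteMeasure μ]
    (h : μ (cyl a) ≠ 0) : IsProbabilityMeasure (tauWord a μ) := by
  have : IsProbabilityMeasure (μ[|cyl a]) := cond_isProbabilityMeasure h
  exact Measure.isProbabilityMeasure_map (measurable_shift a.length).aemeasurable

lemma meas_cyl_ne_zero {a : List A} {μ : Measure (ℕ → A)} {ν : ProbabilityMeasure (ℕ → A)}
    (hν : (ν : Measure (ℕ → A)) = tauWord a μ) : μ (cyl a) ≠ 0 := by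
  intro h
  have h0 : (ν : Measure (ℕ → A)) = 0 := by rw [hν, tauWord_eq_zero a h]
  have h1 : (ν : Measure (ℕ → A)) Set.univ = 1 := measure_univ
  rw [h0] at h1
  simp at h1

/-! #### Weak-* continuity of `τ(b)` where it is defined -/

def shiftCM (k : ℕ) : C(ℕ → A, ℕ → A) :=
  ⟨fun v n => v (n + k), continuous_pi fun n => continuous_apply _⟩

noncomputable def massBCF (b : List A) : BoundedContinuousFunction (ℕ → A) ℝ :=
  BoundedContinuousFunction.indicator (cyl b) (isClopen_cyl b)

noncomputable def indBCF (b : List A) (f : BoundedContinuousFunction (ℕ → A) ℝ) :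
    BoundedContinuousFunction (ℕ → A) ℝ :=
  massBCF b * f.compContinuous (shiftCM b.length)

lemma indBCF_apply (b : List A) (f : BoundedContinuousFunction (ℕ → A) ℝ) (v : ℕ → A) :
    indBCF b f v = (cyl b).indicator (fun v => f (fun n => v (n + b.length))) v := by
  by_cases h : v ∈ cyl b <;>
    simp [indBCF, massBCF, shiftCM, h]

lemma integral_massBCF (b : List A) (μ : Measure (ℕ → A)) [IsProbabilityMeasure μ] :
    ∫ x, massBCF b x ∂μ = (μ (cyl b)).toReal := by
  have : ∀ x, massBCF b x = (cyl b).indicator (fun _ => (1:ℝ)) x := by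
    intro x; by_cases h : x ∈ cyl b <;> simp [massBCF, h]
  rw [integral_congr_ae (Eventually.of_forall this),
    integral_indicator (measurableSet_cyl b)]
  simp [measureReal_def]

lemma integral_tauWord (b : List A) (f : BoundedContinuousFunction (ℕ → A) ℝ)
    (μ : Measure (ℕ → A)) [IsProbabilityMeasure μ] :
    ∫ x, f x ∂(tauWord b μ) = (μ (cyl b)).toReal⁻¹ * ∫ x, indBCF b f x ∂μ := by
  rw [tauWord,
    integral_map (measurable_shift b.length).aemeasurable f.continuous.aestronglyMeasurable,
    ProbabilityTheory.cond, integral_smul_measure, ENNReal.toReal_inv, smul_eq_mul]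
  congr 1
  rw [← integral_indicator (measurableSet_cyl b)]
  exact integral_congr_ae (Eventually.of_forall fun v => (indBCF_apply b f v).symm)

open Classical in
/-- `τ(b)` as a (total) map on probability measures; it is the identity where `τ(b)` is
undefined. -/
noncomputable def tauP (b : List A) (μ : ProbabilityMeasure (ℕ → A)) :
    ProbabilityMeasure (ℕ → A) :=
  if h : (μ : Measure (ℕ → A)) (cyl b) ≠ 0 then ⟨tauWord b μ, isProbabilityMeasure_tauWord b h⟩
  else μ

lemma tauP_coe {b : List A} {μ : ProbabilityMeasure (ℕ → A)}
    (h : (μ : Measure (ℕ → A)) (cyl b) ≠ 0) :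
    (tauP b μ : Measure (ℕ → A)) = tauWord b (μ : Measure (ℕ → A)) := by
  simp [tauP, h]

lemma continuous_intBCF (f : BoundedContinuousFunction (ℕ → A) ℝ) :
    Continuous fun μ : ProbabilityMeasure (ℕ → A) => ∫ x, f x ∂(μ : Measure (ℕ → A)) :=
  ProbabilityMeasure.continuous_integral_boundedContinuousFunction f

lemma isOpen_posCyl (b : List A) :
    IsOpen {μ : ProbabilityMeasure (ℕ → A) | (μ : Measure (ℕ → A)) (cyl b) ≠ 0} := by
  have h : {μ : ProbabilityMeasure (ℕ → A) | (μ : Measure (ℕ → A)) (cyl b) ≠ 0} =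
      (fun μ : ProbabilityMeasure (ℕ → A) =>
        ∫ x, massBCF b x ∂(μ : Measure (ℕ → A))) ⁻¹' {0}ᶜ := by
    ext μ
    simp only [Set.mem_setOf_eq, Set.mem_preimage, Set.mem_compl_iff, Set.mem_singleton_iff,
      integral_massBCF]
    rw [ne_eq, ENNReal.toReal_eq_zero_iff]
    simp [measure_ne_top]
  rw [h]
  exact isOpen_compl_singleton.preimage (continuous_intBCF _)

lemma continuousOn_tauP (b : List A) :
    ContinuousOn (tauP b)
      {μ : ProbabilityMeasure (ℕ → A) | (μ : Measure (ℕ → A)) (cyl b) ≠ 0} := by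
  intro ν hν
  rw [ContinuousWithinAt, ProbabilityMeasure.tendsto_iff_forall_integral_tendsto]
  intro f
  have key : ∀ μ : ProbabilityMeasure (ℕ → A), (μ : Measure (ℕ → A)) (cyl b) ≠ 0 →
      ∫ x, f x ∂(tauP b μ : Measure (ℕ → A)) =
        (∫ x, indBCF b f x ∂(μ : Measure (ℕ → A))) /
          (∫ x, massBCF b x ∂(μ : Measure (ℕ → A))) := by
    intro μ h
    rw [tauP_coe h, integral_tauWord, integral_massBCF, div_eq_inv_mul]
  have hden : (∫ x, massBCF b x ∂(ν : Measure (ℕ → A))) ≠ 0 := by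
    rw [integral_massBCF, ne_eq, ENNReal.toReal_eq_zero_iff]
    push_neg
    exact ⟨hν, measure_ne_top _ _⟩
  have h1 : Tendsto
      (fun μ : ProbabilityMeasure (ℕ → A) => ∫ x, indBCF b f x ∂(μ : Measure (ℕ → A)))
      (𝓝[{μ : ProbabilityMeasure (ℕ → A) | (μ : Measure (ℕ → A)) (cyl b) ≠ 0}] ν)
      (𝓝 (∫ x, indBCF b f x ∂(ν : Measure (ℕ → A)))) :=
    ((continuous_intBCF _).tendsto ν).mono_left nhdsWithin_le_nhds
  have h2 : Tendsto
      (fun μ : ProbabilityMeasure (ℕ → A) => ∫ x, massBCF b x ∂(μ : Measure (ℕ → A)))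
      (𝓝[{μ : ProbabilityMeasure (ℕ → A) | (μ : Measure (ℕ → A)) (cyl b) ≠ 0}] ν)
      (𝓝 (∫ x, massBCF b x ∂(ν : Measure (ℕ → A)))) :=
    ((continuous_intBCF _).tendsto ν).mono_left nhdsWithin_le_nhds
  rw [key ν hν]
  refine Tendsto.congr' ?_ (h1.div h2 hden)
  filter_upwards [self_mem_nhdsWithin] with μ hμ using (key μ hμ).symm

lemma mem_closure_tauP {b : List A} {S : Set (ProbabilityMeasure (ℕ → A))}
    {ν : ProbabilityMeasure (ℕ → A)} (hν : ν ∈ closure S)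
    (h : (ν : Measure (ℕ → A)) (cyl b) ≠ 0) :
    tauP b ν ∈ closure (tauP b ''
      (S ∩ {μ : ProbabilityMeasure (ℕ → A) | (μ : Measure (ℕ → A)) (cyl b) ≠ 0})) := by
  have hνU : ν ∈ closure
      (S ∩ {μ : ProbabilityMeasure (ℕ → A) | (μ : Measure (ℕ → A)) (cyl b) ≠ 0}) := by
    have h' := (isOpen_posCyl b).inter_closure (t := S) ⟨h, hν⟩
    rwa [Set.inter_comm] at h'
  exact (((continuousOn_tauP b) ν h).mono Set.inter_subset_right).mem_closure_image hνU

/-- Images of measures in `M` under admissible `τ(a)` stay in `M`, by transition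
completeness. -/
lemma mem_of_tauWord {M : Set (ProbabilityMeasure (ℕ → A))} (hTC : TransComplete M) :
    ∀ (a : List A) (μ : ProbabilityMeasure (ℕ → A)), μ ∈ M →
      ∀ ν : ProbabilityMeasure (ℕ → A),
        (ν : Measure (ℕ → A)) = tauWord a (μ : Measure (ℕ → A)) → ν ∈ M := by
  intro a
  induction a with
  | nil =>
    intro μ hμ ν hν
    rw [tauWord_nil] at hν
    rwa [ProbabilityMeasure.toMeasure_injective hν]
  | cons σ b ih =>
    intro μ hμ ν hν
    rw [tauWord_cons] at hν
    have hσ : (μ : Measure (ℕ → A)) (cyl [σ]) ≠ 0 := by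
      intro h
      rw [tauWord_eq_zero [σ] h, tauWord_zero] at hν
      have h1 : (ν : Measure (ℕ → A)) Set.univ = 1 := measure_univ
      rw [hν] at h1
      simp at h1
    have hP : IsProbabilityMeasure (tauWord [σ] (μ : Measure (ℕ → A))) :=
      isProbabilityMeasure_tauWord [σ] hσ
    have hκ : (⟨tauWord [σ] (μ : Measure (ℕ → A)), hP⟩ : ProbabilityMeasure (ℕ → A)) ∈ M :=
      hTC μ hμ σ _ rfl
    exact ih _ hκ ν hν

end Aux

/-- For a transition complete `M` satisfying condition (I), for every `I ∈ ℕ` one has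
`M = closure (⋃_{a admissible of length I} τ(a) M)`. -/
theorem condI_words (M : Set (ProbabilityMeasure (ℕ → A)))
    (hTC : TransComplete M) (hI : CondI M) :
    ∀ I : ℕ, M = closure (⋃ a ∈ {a : List A | a.length = I ∧ a ∈ Lang M},
      {ν : ProbabilityMeasure (ℕ → A) |
        ∃ μ ∈ M, (ν : Measure (ℕ → A)) = tauWord a (μ : Measure (ℕ → A))}) := by
  have hIeq : M = closure (⋃ σ : A, {ν : ProbabilityMeasure (ℕ → A) |
      ∃ μ ∈ M, (ν : Measure (ℕ → A)) = tauWord [σ] (μ : Measure (ℕ → A))}) := hI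
  have hMclosed : IsClosed M := by rw [hIeq]; exact isClosed_closure
  set W : ℕ → Set (ProbabilityMeasure (ℕ → A)) := fun J =>
    ⋃ a ∈ {a : List A | a.length = J ∧ a ∈ Lang M},
      {ν : ProbabilityMeasure (ℕ → A) |
        ∃ μ ∈ M, (ν : Measure (ℕ → A)) = tauWord a (μ : Measure (ℕ → A))} with hW
  have main : ∀ I : ℕ, M ⊆ closure (W I) := by
    intro I
    induction I with
    | zero =>
      intro μ hμ
      apply subset_closure
      refine Set.mem_biUnion (x := ([] : List A)) ⟨rfl, ⟨μ, hμ, ?_⟩⟩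
        ⟨μ, hμ, (tauWord_nil _).symm⟩
      rw [cyl_nil, measure_univ]
      exact one_ne_zero
    | succ I IH =>
      have h2 : W I ⊆ closure (W (I + 1)) := by
        intro ν' hν'
        simp only [hW, Set.mem_iUnion, Set.mem_setOf_eq] at hν'
        obtain ⟨b, ⟨hblen, _⟩, ν, hνM, heq⟩ := hν'
        have hb : (ν : Measure (ℕ → A)) (cyl b) ≠ 0 := meas_cyl_ne_zero heq
        have hν'eq : ν' = tauP b ν :=
          ProbabilityMeasure.toMeasure_injective (by rw [heq, tauP_coe hb])
        have hνcl : ν ∈ closure (⋃ σ : A, {ρ' : ProbabilityMeasure (ℕ → A) |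
            ∃ μ ∈ M, (ρ' : Measure (ℕ → A)) = tauWord [σ] (μ : Measure (ℕ → A))}) :=
          hIeq ▸ hνM
        have hcl := mem_closure_tauP hνcl hb
        rw [hν'eq]
        refine closure_mono ?_ hcl
        rintro η' ⟨η, ⟨hηT, hηU⟩, rfl⟩
        simp only [Set.mem_iUnion, Set.mem_setOf_eq] at hηT
        obtain ⟨σ, ρ, hρM, hηeq⟩ := hηT
        have hcoe : (tauP b η : Measure (ℕ → A)) = tauWord (σ :: b) (ρ : Measure (ℕ → A)) := by
          rw [tauP_coe hηU, hηeq, ← tauWord_cons]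
        refine Set.mem_biUnion (x := σ :: b) ⟨by simp [hblen], ⟨ρ, hρM, meas_cyl_ne_zero hcoe⟩⟩
          ⟨ρ, hρM, hcoe⟩
      intro μ hμ
      have h1 : μ ∈ closure (W I) := IH hμ
      have h3 : closure (W I) ⊆ closure (W (I + 1)) := by
        have := closure_mono h2
        rwa [closure_closure] at this
      exact h3 h1
  intro I
  refine Set.Subset.antisymm (main I) ?_
  refine closure_minimal ?_ hMclosed
  intro ν hν
  simp only [Set.mem_iUnion, Set.mem_setOf_eq] at hν
  obtain ⟨a, -, μm, hμm, hνeq⟩ := hν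
  exact mem_of_tauWord hTC a μm hμm ν hνeq
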